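/- Let n > r >= 3 and let A, B be disjoint vertex sets with |A| = ceil(n/2) and |B| = floor(n/2). Let H'_2 be the r-uniform hypergraph on A ∪ B whose edges are all r-element subsets X of A ∪ B with |X ∩ A| <= 1. Then for any two distinct vertices x, y in B, H'_2 contains no hamiltonian Berge path from x to y. -/

import Mathlib

variable {α : Type*}

/-- A Berge path with `s` vertices `v 0, ..., v (s-1)` and `s-1` edges
`e 0, ..., e (s-2)` in the hypergraph with edge set `H`:  the listed vertices
are distinct, the listed edges are distinct edges of `H`, and
`{v i, v (i+1)} ⊆ e i` for each `i < s - 1`. -/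
def IsBergePath (H : Finset (Finset α)) (s : ℕ) (v : ℕ → α) (e : ℕ → Finset α) : Prop :=
  (∀ i j, i < s → j < s → v i = v j → i = j) ∧
  (∀ i j, i < s - 1 → j < s - 1 → e i = e j → i = j) ∧
  (∀ i, i < s - 1 → e i ∈ H) ∧
  (∀ i, i < s - 1 → v i ∈ e i ∧ v (i + 1) ∈ e i)

/-- A hamiltonian Berge path from `x` to `y` in a hypergraph on `n` vertices
(the vertex set being the whole type `α`): a Berge path with `n` vertices
starting at `x`, ending at `y`, and visiting every vertex. -/
def IsHamBergePathFromTo (H : Finset (Finset α)) (n : ℕ) (x y : α) : Prop :=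
  ∃ (v : ℕ → α) (e : ℕ → Finset α),
    IsBergePath H n v e ∧ v 0 = x ∧ v (n - 1) = y ∧ ∀ z : α, ∃ i < n, v i = z

/-- The degree of a vertex in a hypergraph: the number of edges containing it. -/
def hdeg [DecidableEq α] (H : Finset (Finset α)) (w : α) : ℕ :=
  (H.filter (fun g => w ∈ g)).card

/-- The hypergraph $H'_2$ on $A \cup B$ whose edges are the $r$-sets meeting
$A$ in at most one vertex has no hamiltonian Berge path between two vertices of
$B$. -/
theorem stmt_8 [Fintype α] [DecidableEq α] (n r : ℕ)
    (hcard : Fintype.card α = n) (hr : 3 ≤ r) (hrn : r < n)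
    (A B : Finset α) (hAB : Disjoint A B) (hU : A ∪ B = Finset.univ)
    (hA : A.card = (n + 1) / 2) (hB : B.card = n / 2)
    (x y : α) (hx : x ∈ B) (hy : y ∈ B) (hxy : x ≠ y) :
    ¬ IsHamBergePathFromTo
        (Finset.univ.powerset.filter (fun X => X.card = r ∧ (X ∩ A).card ≤ 1))
        n x y := by
  rintro ⟨v, e, ⟨hvinj, heinj, heH, hve⟩, hv0, hvlast, hsurj⟩
  have hn4 : 4 ≤ n := by omega
  have hnotA : ∀ b ∈ B, b ∉ A := fun b hb ha => Finset.disjoint_left.mp hAB ha hb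
  set S : Finset ℕ := (Finset.range n).filter (fun i => v i ∈ A) with hS
  -- no two consecutive indices both in S
  have hcons : ∀ i, i ∈ S → i + 1 ∉ S := by
    intro i hi hi1
    simp only [hS, Finset.mem_filter, Finset.mem_range] at hi hi1
    have hilt : i < n - 1 := by omega
    have hEi := heH i hilt
    simp only [Finset.mem_filter, Finset.mem_powerset] at hEi
    have hmem := hve i hilt
    have hne : v i ≠ v (i + 1) := fun h => by
      have := hvinj i (i + 1) (by omega) (by omega) h; omega
    have hpair : ({v i, v (i + 1)} : Finset α) ⊆ e i ∩ A := by
      intro z hz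
      simp only [Finset.mem_insert, Finset.mem_singleton] at hz
      rcases hz with rfl | rfl <;>
        simp [Finset.mem_inter, hmem.1, hmem.2, hi.2, hi1.2]
    have h2 : 2 ≤ (e i ∩ A).card := by
      calc 2 = ({v i, v (i + 1)} : Finset α).card := (Finset.card_pair hne).symm
        _ ≤ _ := Finset.card_le_card hpair
    have := hEi.2.2
    omega
  have h0S : ∀ i ∈ S, i ≠ 0 := by
    intro i hi h
    subst h
    exact hnotA x hx (hv0 ▸ (Finset.mem_filter.mp hi).2)
  have hlastS : ∀ i ∈ S, i ≠ n - 1 := by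
    intro i hi h
    exact hnotA y hy (by rw [← hvlast, ← h]; exact (Finset.mem_filter.mp hi).2)
  have hcardS : S.card = A.card := by
    apply Finset.card_bij (fun i _ => v i)
    · intro i hi; exact (Finset.mem_filter.mp hi).2
    · intro i hi j hj h
      simp only [hS, Finset.mem_filter, Finset.mem_range] at hi hj
      exact hvinj i j hi.1 hj.1 h
    · intro a ha
      obtain ⟨i, hi, hvi⟩ := hsurj a
      exact ⟨i, Finset.mem_filter.mpr ⟨Finset.mem_range.mpr hi, hvi ▸ ha⟩, hvi⟩
  have hbound : S.card ≤ (n - 1) / 2 := by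
    have := Finset.card_range ((n - 1) / 2)
    rw [← this]
    apply Finset.card_le_card_of_injOn (fun i => (i - 1) / 2)
    · intro i hi
      have h0 := h0S i hi
      have hl := hlastS i hi
      have hlt : i < n := Finset.mem_range.mp (Finset.mem_filter.mp hi).1
      simp only [Finset.coe_range, Finset.mem_coe, Finset.mem_range, Set.mem_Iio]
      omega
    · intro i hi j hj h
      simp only at h
      have h0i := h0S i hi
      have h0j := h0S j hj
      by_contra hne
      rcases lt_or_gt_of_ne hne with hij | hij
      · have : j ≠ i + 1 := fun hj1 => hcons i hi (hj1 ▸ hj)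
        omega
      · have : i ≠ j + 1 := fun hi1 => hcons j hj (hi1 ▸ hi)
        omega
  rw [hcardS, hA] at *
  omega
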